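/- Solution-to-ILP direction: if a rooted tree T (preprocessed so all leaves have equal depth, weights on vertices, root weight 0) admits a cover by m rooted subtrees each of weight at most B, where each leaf of T is assigned to exactly one subtree, then the configuration ILP has a feasible nonnegative integer solution with objective value Σ_j x_{1,(CF_j,1)} ≤ m. -/

import Mathlib

open scoped Classical

section ConfigILP

variable {V J : Type*} [Fintype V] [DecidableEq V] [Fintype J]

/-- The children of `v` inside the vertex set `W` of a rooted tree given by a parent
function (the root `r` is nobody's child). -/
noncomputable def childrenIn (r : V) (parent : V → V) (W : Finset V) (v : V) : Finset V :=
  W.filter (fun s => parent s = v ∧ s ≠ r)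

/-- `v` is a leaf of the vertex set `W`. -/
def leafIn (r : V) (parent : V → V) (W : Finset V) (v : V) : Prop :=
  v ∈ W ∧ childrenIn r parent W v = ∅

/-- Vertex `v` is consistent with location `k` of configuration `j`. -/
def consistentWith (size : J → ℕ) (cfDepth : J → ℕ → ℕ) (cfWeight : J → ℕ → ℤ)
    (depth : V → ℕ) (w : V → ℤ) (v : V) (j : J) (k : ℕ) : Prop :=
  k < size j ∧ depth v = cfDepth j k ∧ w v = cfWeight j k

/-- Feasibility of `x` for the configuration ILP over the vertex set `W`. -/
def ILPFeas (r : V) (parent : V → V) (size : J → ℕ) (ζ : ℕ)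
    (cfParent : J → ℕ → ℕ) (cfDepth : J → ℕ → ℕ) (cfWeight : J → ℕ → ℤ)
    (depth : V → ℕ) (w : V → ℤ) (W : Finset V) (x : V → J → ℕ → ℕ) : Prop :=
  (∀ v ∈ W, ∀ (j : J) (k : ℕ), k < size j → k ≠ 0 →
      (∑ s ∈ childrenIn r parent W v, x s j k) = x v j (cfParent j k)) ∧
  (∀ v, leafIn r parent W v → (∑ j : J, ∑ k ∈ Finset.range ζ, x v j k) = 1) ∧
  (∀ v ∈ W, ∀ (j : J) (k : ℕ),
      ¬ consistentWith size cfDepth cfWeight depth w v j k → x v j k = 0)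

/-- Solution-to-ILP direction: if the tree admits a cover by `m` rooted subtrees, each
of weight at most `B`, each leaf belonging to exactly one subtree, and each subtree
realized by some configuration (via a location bijection preserving the root, the
parent relation, and consistency), then the configuration ILP has a feasible
nonnegative integer solution of objective value at most `m`. -/
theorem solution_to_ilp
    (r : V) (parent : V → V) (w : V → ℤ) (depth : V → ℕ)
    (ζ : ℕ) (size : J → ℕ) (hζ : ∀ j, size j ≤ ζ)
    (cfParent : J → ℕ → ℕ) (cfDepth : J → ℕ → ℕ) (cfWeight : J → ℕ → ℤ)
    (B : ℤ) (m : ℕ) (S : Fin m → Finset V)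
    (hroot : ∀ i, r ∈ S i)
    (hclosed : ∀ i, ∀ v ∈ S i, v ≠ r → parent v ∈ S i)
    (hweight : ∀ i, (∑ v ∈ S i, w v) ≤ B)
    (hleaf : ∀ v, leafIn r parent Finset.univ v → ∃! i, v ∈ S i)
    (hconfig : ∀ i, ∃ (j : J) (φ : V → ℕ),
      φ r = 0 ∧
      (∀ v ∈ S i, consistentWith size cfDepth cfWeight depth w v j (φ v)) ∧
      (∀ v ∈ S i, v ≠ r → cfParent j (φ v) = φ (parent v)) ∧
      (∀ k < size j, ∃! v, v ∈ S i ∧ φ v = k)) :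
    ∃ x : V → J → ℕ → ℕ,
      ILPFeas r parent size ζ cfParent cfDepth cfWeight depth w Finset.univ x ∧
      (∑ j : J, x r j 0) ≤ m := by
  classical
  choose jc φc hφ0 hcons hpar huniq using hconfig
  set x : V → J → ℕ → ℕ := fun v j k =>
    (Finset.univ.filter (fun i : Fin m => jc i = j ∧ v ∈ S i ∧ φc i v = k)).card with hx
  have hcard : ∀ v j k, x v j k
      = ∑ i : Fin m, (if jc i = j ∧ v ∈ S i ∧ φc i v = k then 1 else 0) := by
    intro v j k
    rw [hx]
    exact Finset.card_filter _ _
  refine ⟨x, ⟨?_, ?_, ?_⟩, ?_⟩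
  · -- constraint (I)
    intro v _ j k hk hk0
    simp only [hcard]
    rw [Finset.sum_comm]
    refine Finset.sum_congr rfl fun i _ => ?_
    by_cases hQ : jc i = j ∧ v ∈ S i ∧ φc i v = cfParent j k
    · obtain ⟨hj, hv, hφv⟩ := hQ
      subst hj
      rw [if_pos ⟨rfl, hv, hφv⟩]
      obtain ⟨u, ⟨huS, huφ⟩, huu⟩ := huniq i k hk
      have hur : u ≠ r := by
        intro h; subst h; rw [hφ0 i] at huφ; exact hk0 huφ.symm
      have hpu : parent u ∈ S i := hclosed i u huS hur
      have hφpu : φc i (parent u) = cfParent (jc i) k := by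
        rw [← huφ]; exact (hpar i u huS hur).symm
      have hpuv : parent u = v := by
        have hlt : cfParent (jc i) k < size (jc i) := by
          rw [← hφv]; exact (hcons i v hv).1
        obtain ⟨z, hz, hzu⟩ := huniq i (cfParent (jc i) k) hlt
        rw [hzu (parent u) ⟨hpu, hφpu⟩, hzu v ⟨hv, hφv⟩]
      rw [Finset.sum_eq_single u]
      · rw [if_pos ⟨rfl, huS, huφ⟩]
      · intro s hs hsu
        rw [if_neg]
        rintro ⟨-, hsS, hsφ⟩
        exact hsu (huu s ⟨hsS, hsφ⟩)
      · intro hu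
        exact absurd (by simp [childrenIn, hpuv, hur]) hu
    · rw [if_neg hQ]
      refine Finset.sum_eq_zero fun s hs => ?_
      rw [if_neg]
      rintro ⟨hj, hsS, hsφ⟩
      simp only [childrenIn, Finset.mem_filter] at hs
      obtain ⟨-, hps, hsr⟩ := hs
      refine hQ ⟨hj, ?_, ?_⟩
      · rw [← hps]; exact hclosed i s hsS hsr
      · rw [← hps, ← hpar i s hsS hsr, hsφ, hj]
  · -- constraint (II)
    intro v hv
    obtain ⟨i0, hi0, hiu⟩ := hleaf v hv
    simp only [hcard]
    conv_lhs => enter [2, j]; rw [Finset.sum_comm]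
    rw [Finset.sum_comm]
    have hper : ∀ i : Fin m, (∑ j : J, ∑ k ∈ Finset.range ζ,
        (if jc i = j ∧ v ∈ S i ∧ φc i v = k then 1 else 0)) = if v ∈ S i then 1 else 0 := by
      intro i
      by_cases hvS : v ∈ S i
      · rw [if_pos hvS, Finset.sum_eq_single (jc i)]
        · rw [Finset.sum_eq_single (φc i v)]
          · rw [if_pos ⟨rfl, hvS, rfl⟩]
          · intro k _ hk; rw [if_neg]; rintro ⟨-, -, h⟩; exact hk h.symm
          · intro h
            exact absurd (Finset.mem_range.mpr
              (lt_of_lt_of_le (hcons i v hvS).1 (hζ (jc i)))) h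
        · intro j _ hj
          refine Finset.sum_eq_zero fun k _ => ?_
          rw [if_neg]; rintro ⟨h, -, -⟩; exact hj h.symm
        · simp
      · rw [if_neg hvS]
        refine Finset.sum_eq_zero fun j _ => Finset.sum_eq_zero fun k _ => ?_
        rw [if_neg]; rintro ⟨-, h, -⟩; exact hvS h
    rw [Finset.sum_congr rfl fun i _ => hper i, Finset.sum_eq_single i0]
    · rw [if_pos hi0]
    · intro i _ hi; rw [if_neg]; intro h; exact hi (hiu i h)
    · simp
  · -- constraint (III)
    intro v _ j k hnc
    rw [hx]
    rw [Finset.card_eq_zero, Finset.filter_eq_empty_iff]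
    rintro i - ⟨hj, hvS, hφ⟩
    exact hnc (by rw [← hj, ← hφ]; exact hcons i v hvS)
  · -- objective
    simp only [hcard]
    rw [Finset.sum_comm]
    calc (∑ i : Fin m, ∑ j : J,
          (if jc i = j ∧ r ∈ S i ∧ φc i r = 0 then 1 else 0)) ≤ ∑ _i : Fin m, 1 := by
          refine Finset.sum_le_sum fun i _ => ?_
          rw [Finset.sum_eq_single (jc i)]
          · split <;> simp
          · intro j _ hj; rw [if_neg]; rintro ⟨h, -, -⟩; exact hj h.symm
          · simp
      _ = m := by simp

end ConfigILP
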